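/- Let ρʲ, ρᵏ ∈ [0,1) and φ : ℝ → ℝ. For the PML pairwise estimator with t = fⱼ - fₖ, define φ̃(+1,-1) = φ(t)/(1-ρᵏ), φ̃(-1,+1) = φ(-t)/(1-ρʲ), φ̃(+1,+1) = 0, and φ̃(-1,-1) = (-ρʲφ(t) - ρᵏφ(-t))/((1-ρʲ)(1-ρᵏ)). Under the PML noise model (a true -1 label on coordinate j flips to +1 with probability ρʲ independently; true +1 labels never flip), the expectation of φ̃(ỹⱼ, ỹₖ) over the noisy labels equals: φ(t) if (yⱼ,yₖ) = (+1,-1); φ(-t) if (yⱼ,yₖ) = (-1,+1); and 0 if yⱼ = yₖ. -/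
import Mathlib


theorem stmt_12 (ρj ρk : ℝ) (hj0 : 0 ≤ ρj) (hj1 : ρj < 1) (hk0 : 0 ≤ ρk) (hk1 : ρk < 1)
    (φ : ℝ → ℝ) (t : ℝ) (yj yk : ℝ) (hyj : yj = 1 ∨ yj = -1) (hyk : yk = 1 ∨ yk = -1) :
    let φt : ℝ → ℝ → ℝ := fun s1 s2 =>
      if s1 = 1 ∧ s2 = -1 then φ t / (1 - ρk)
      else if s1 = -1 ∧ s2 = 1 then φ (-t) / (1 - ρj)
      else if s1 = 1 ∧ s2 = 1 then 0
      else (-(ρj * φ t) - ρk * φ (-t)) / ((1 - ρj) * (1 - ρk))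
    let rj : ℝ := if yj = 1 then 0 else ρj
    let rk : ℝ := if yk = 1 then 0 else ρk
    ∑ e1 : Bool, ∑ e2 : Bool,
        (if e1 then rj else 1 - rj) * (if e2 then rk else 1 - rk) *
          φt (if e1 then -yj else yj) (if e2 then -yk else yk)
      = if yj = 1 ∧ yk = -1 then φ t else if yj = -1 ∧ yk = 1 then φ (-t) else 0 := by
  have hj : (1 : ℝ) - ρj ≠ 0 := by linarith
  have hk : (1 : ℝ) - ρk ≠ 0 := by linarith
  rcases hyj with h1 | h1 <;> rcases hyk with h2 | h2 <;>
    subst h1 <;> subst h2 <;>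
    simp [Fintype.sum_bool] <;> norm_num <;> field_simp <;> ring
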